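/- arXiv:2009.00598 — 2 statements merged into one kernel-verified Lean document; each statement's English description precedes it below -/
import Mathlib

section
/- Let A, B be natural numbers and suppose that the set S of finitely supported sequences (t_i)_{i≥1} of natural numbers satisfying ∑_{i≥1} t_i = A and ∑_{i≥1} i·t_i = B is nonempty. Then there exists a sequence (t_i) ∈ S minimizing the product ∏_{i≥1} (t_i)! over S such that for all but at most one index i one has t_i ≥ t_{i+1}; moreover, if i is an exceptional index (with t_i < t_{i+1}), then t_i = 0, t_{i+1} = 1 and t_{i+2} = 0. -/
open Finset

private def Good16 (A B : ℕ) (t : ℕ → ℕ) : Prop :=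
  t 0 = 0 ∧ (Function.support t).Finite ∧ (∑ᶠ i : ℕ, t i) = A ∧ (∑ᶠ i : ℕ, i * t i) = B

private def Pr16 (B : ℕ) (t : ℕ → ℕ) : ℕ := ∏ k ∈ Finset.range (B + 2), (t k).factorial

private def W16 (B : ℕ) (t : ℕ → ℕ) : ℕ := ∑ k ∈ Finset.range (B + 2), k * k * t k

private lemma supp16 {A B : ℕ} {t : ℕ → ℕ} (h : Good16 A B t) {k : ℕ} (hk : t k ≠ 0) :
    k ≤ B := by
  obtain ⟨h0, hfin, hA, hB⟩ := h
  have hsub : Function.support (fun i => i * t i) ⊆ Function.support t := by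
    intro x hx
    simp only [Function.mem_support] at *
    intro hx0; exact hx (by simp [hx0])
  have hfin' : (Function.support fun i => i * t i).Finite := hfin.subset hsub
  have h1 := single_le_finsum (f := fun i => i * t i) k hfin' (fun j => Nat.zero_le _)
  rw [hB] at h1
  have h2 : k ≤ k * t k := Nat.le_mul_of_pos_right k (Nat.pos_of_ne_zero hk)
  omega

private lemma suppsub16 {A B : ℕ} {t : ℕ → ℕ} (h : Good16 A B t) :
    Function.support t ⊆ ↑(Finset.range (B + 2)) := by
  intro k hk
  simp only [Function.mem_support] at hk
  have := supp16 h hk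
  simp only [Finset.coe_range, Set.mem_Iio]
  omega

private lemma wsuppsub16 {A B : ℕ} {t : ℕ → ℕ} (h : Good16 A B t) :
    Function.support (fun k => k * t k) ⊆ ↑(Finset.range (B + 2)) := by
  intro k hk
  simp only [Function.mem_support] at hk
  apply suppsub16 h
  simp only [Function.mem_support]
  intro h0; exact hk (by simp [h0])

private lemma sumA16 {A B : ℕ} {t : ℕ → ℕ} (h : Good16 A B t) :
    ∑ k ∈ Finset.range (B + 2), t k = A := by
  rw [← h.2.2.1]; exact (finsum_eq_sum_of_support_subset t (suppsub16 h)).symm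

private lemma sumB16 {A B : ℕ} {t : ℕ → ℕ} (h : Good16 A B t) :
    ∑ k ∈ Finset.range (B + 2), k * t k = B := by
  have h1 := finsum_eq_sum_of_support_subset (fun k => k * t k) (wsuppsub16 h)
  rw [h.2.2.2] at h1
  exact h1.symm

private lemma pr16 {A B : ℕ} {t : ℕ → ℕ} (h : Good16 A B t) :
    (∏ᶠ i : ℕ, (t i).factorial) = Pr16 B t := by
  apply finprod_eq_prod_of_mulSupport_subset
  intro k hk
  apply suppsub16 h
  simp only [Function.mem_mulSupport] at hk
  simp only [Function.mem_support]
  intro h0; exact hk (by simp [h0])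

private lemma mkGood16 {A B : ℕ} {s : ℕ → ℕ} (h0 : s 0 = 0)
    (hsub : Function.support s ⊆ ↑(Finset.range (B + 2)))
    (hA : ∑ k ∈ Finset.range (B + 2), s k = A)
    (hB : ∑ k ∈ Finset.range (B + 2), k * s k = B) :
    Good16 A B s := by
  have hfin : (Function.support s).Finite :=
    Set.Finite.subset (Finset.range (B + 2)).finite_toSet hsub
  refine ⟨h0, hfin, ?_, ?_⟩
  · rw [finsum_eq_sum_of_support_subset s hsub]; exact hA
  · rw [finsum_eq_sum_of_support_subset (fun k => k * s k) ?_]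
    · exact hB
    · intro k hk
      simp only [Function.mem_support] at hk
      apply hsub
      simp only [Function.mem_support]
      intro h0'; exact hk (by simp [h0'])

private lemma split4 {i j B : ℕ} (hij : i + 2 ≤ j) (hi : i + 1 < B + 2) (hj : j + 1 < B + 2)
    (f : ℕ → ℕ) :
    ∑ k ∈ Finset.range (B + 2), f k =
      (∑ k ∈ Finset.range (B + 2) \ {i, i + 1, j, j + 1}, f k) +
        (f i + (f (i + 1) + (f j + f (j + 1)))) := by
  have hsub : ({i, i + 1, j, j + 1} : Finset ℕ) ⊆ Finset.range (B + 2) := by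
    intro k hk
    simp only [Finset.mem_insert, Finset.mem_singleton] at hk
    simp only [Finset.mem_range]
    omega
  rw [← Finset.sum_sdiff hsub]
  congr 1
  rw [Finset.sum_insert (by simp only [Finset.mem_insert, Finset.mem_singleton]; omega),
    Finset.sum_insert (by simp only [Finset.mem_insert, Finset.mem_singleton]; omega),
    Finset.sum_insert (by simp only [Finset.mem_singleton]; omega),
    Finset.sum_singleton]

private lemma prod4 {i j B : ℕ} (hij : i + 2 ≤ j) (hi : i + 1 < B + 2) (hj : j + 1 < B + 2)
    (f : ℕ → ℕ) :
    ∏ k ∈ Finset.range (B + 2), f k =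
      (∏ k ∈ Finset.range (B + 2) \ {i, i + 1, j, j + 1}, f k) *
        (f i * (f (i + 1) * (f j * f (j + 1)))) := by
  have hsub : ({i, i + 1, j, j + 1} : Finset ℕ) ⊆ Finset.range (B + 2) := by
    intro k hk
    simp only [Finset.mem_insert, Finset.mem_singleton] at hk
    simp only [Finset.mem_range]
    omega
  rw [← Finset.prod_sdiff hsub]
  congr 1
  rw [Finset.prod_insert (by simp only [Finset.mem_insert, Finset.mem_singleton]; omega),
    Finset.prod_insert (by simp only [Finset.mem_insert, Finset.mem_singleton]; omega),
    Finset.prod_insert (by simp only [Finset.mem_singleton]; omega),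
    Finset.prod_singleton]

private lemma split3 {i B : ℕ} (hi : i + 2 < B + 2) (f : ℕ → ℕ) :
    ∑ k ∈ Finset.range (B + 2), f k =
      (∑ k ∈ Finset.range (B + 2) \ {i, i + 1, i + 2}, f k) +
        (f i + (f (i + 1) + f (i + 2))) := by
  have hsub : ({i, i + 1, i + 2} : Finset ℕ) ⊆ Finset.range (B + 2) := by
    intro k hk
    simp only [Finset.mem_insert, Finset.mem_singleton] at hk
    simp only [Finset.mem_range]
    omega
  rw [← Finset.sum_sdiff hsub]
  congr 1
  rw [Finset.sum_insert (by simp only [Finset.mem_insert, Finset.mem_singleton]; omega),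
    Finset.sum_insert (by simp only [Finset.mem_singleton]; omega),
    Finset.sum_singleton]

private lemma prod3 {i B : ℕ} (hi : i + 2 < B + 2) (f : ℕ → ℕ) :
    ∏ k ∈ Finset.range (B + 2), f k =
      (∏ k ∈ Finset.range (B + 2) \ {i, i + 1, i + 2}, f k) *
        (f i * (f (i + 1) * f (i + 2))) := by
  have hsub : ({i, i + 1, i + 2} : Finset ℕ) ⊆ Finset.range (B + 2) := by
    intro k hk
    simp only [Finset.mem_insert, Finset.mem_singleton] at hk
    simp only [Finset.mem_range]
    omega
  rw [← Finset.prod_sdiff hsub]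
  congr 1
  rw [Finset.prod_insert (by simp only [Finset.mem_insert, Finset.mem_singleton]; omega),
    Finset.prod_insert (by simp only [Finset.mem_singleton]; omega),
    Finset.prod_singleton]

private lemma fact4 {x b c y : ℕ} (h1 : x ≤ b) (h2 : y ≤ c) :
    (x + 1).factorial * (b.factorial * (c.factorial * (y + 1).factorial)) ≤
      x.factorial * ((b + 1).factorial * ((c + 1).factorial * y.factorial)) := by
  rw [Nat.factorial_succ, Nat.factorial_succ, Nat.factorial_succ, Nat.factorial_succ]
  have h3 : (x + 1) * (y + 1) ≤ (b + 1) * (c + 1) := Nat.mul_le_mul (by omega) (by omega)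
  calc (x + 1) * x.factorial * (b.factorial * (c.factorial * ((y + 1) * y.factorial)))
      = ((x + 1) * (y + 1)) * (x.factorial * (b.factorial * (c.factorial * y.factorial))) := by
        ring
    _ ≤ ((b + 1) * (c + 1)) * (x.factorial * (b.factorial * (c.factorial * y.factorial))) :=
        Nat.mul_le_mul_right _ h3
    _ = x.factorial * ((b + 1) * b.factorial * ((c + 1) * c.factorial * y.factorial)) := by ring

private lemma fact3 {x b : ℕ} (h1 : x ≤ b + 1) :
    (x + 1).factorial * (b.factorial * 1) ≤ x.factorial * ((b + 2).factorial * 1) := by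
  rw [Nat.factorial_succ]
  have hb : (b + 2).factorial = (b + 2) * ((b + 1) * b.factorial) := by
    rw [Nat.factorial_succ, Nat.factorial_succ]
  rw [hb]
  have h3 : x + 1 ≤ (b + 2) * (b + 1) := by nlinarith
  calc (x + 1) * x.factorial * (b.factorial * 1)
      = (x + 1) * (x.factorial * b.factorial) := by ring
    _ ≤ ((b + 2) * (b + 1)) * (x.factorial * b.factorial) := Nat.mul_le_mul_right _ h3
    _ = x.factorial * ((b + 2) * ((b + 1) * b.factorial) * 1) := by ring

private lemma move1 {A B : ℕ} {t : ℕ → ℕ} (ht : Good16 A B t) {i j : ℕ} (hi : 1 ≤ i)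
    (hv : t i < t (i + 1)) (hij : i + 2 ≤ j) (hd : t (j + 1) < t j) :
    ∃ s : ℕ → ℕ, Good16 A B s ∧ Pr16 B s ≤ Pr16 B t ∧ W16 B t < W16 B s := by
  obtain ⟨b, hb⟩ : ∃ b, t (i + 1) = b + 1 := ⟨t (i + 1) - 1, by omega⟩
  obtain ⟨c, hc⟩ : ∃ c, t j = c + 1 := ⟨t j - 1, by omega⟩
  set s : ℕ → ℕ := fun k => if k = i then t i + 1 else if k = i + 1 then b
    else if k = j then c else if k = j + 1 then t (j + 1) + 1 else t k with hs
  have hiB : i + 1 ≤ B := supp16 ht (k := i + 1) (by omega)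
  have hjB : j ≤ B := supp16 ht (k := j) (by omega)
  have hi1B : i + 1 < B + 2 := by omega
  have hj1B : j + 1 < B + 2 := by omega
  have hsi : s i = t i + 1 := by simp [hs]
  have hsi1 : s (i + 1) = b := by
    have e1 : i + 1 ≠ i := by omega
    simp [hs, e1]
  have hsj : s j = c := by
    have e1 : j ≠ i := by omega
    have e2 : j ≠ i + 1 := by omega
    simp [hs, e1, e2]
  have hsj1 : s (j + 1) = t (j + 1) + 1 := by
    have e1 : j + 1 ≠ i := by omega
    have e2 : j + 1 ≠ i + 1 := by omega
    have e3 : j + 1 ≠ j := by omega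
    simp [hs, e1, e2, e3, show j ≠ i by omega]
  have hoff : ∀ k ∈ Finset.range (B + 2) \ ({i, i + 1, j, j + 1} : Finset ℕ), s k = t k := by
    intro k hk
    simp only [Finset.mem_sdiff, Finset.mem_insert, Finset.mem_singleton, not_or] at hk
    obtain ⟨-, h1, h2, h3, h4⟩ := hk
    simp only [hs, if_neg h1, if_neg h2, if_neg h3, if_neg h4]
  have hoffall : ∀ k, k ≠ i → k ≠ i + 1 → k ≠ j → k ≠ j + 1 → s k = t k := by
    intro k h1 h2 h3 h4
    simp only [hs, if_neg h1, if_neg h2, if_neg h3, if_neg h4]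
  have hssub : Function.support s ⊆ ↑(Finset.range (B + 2)) := by
    intro k hk
    simp only [Function.mem_support] at hk
    simp only [Finset.coe_range, Set.mem_Iio]
    rcases eq_or_ne k i with rfl | h1
    · omega
    rcases eq_or_ne k (i + 1) with rfl | h2
    · omega
    rcases eq_or_ne k j with rfl | h3
    · omega
    rcases eq_or_ne k (j + 1) with rfl | h4
    · omega
    · rw [hoffall k h1 h2 h3 h4] at hk
      have := supp16 ht hk
      omega
  have hs0 : s 0 = 0 := by
    rw [hoffall 0 (by omega) (by omega) (by omega) (by omega)]
    exact ht.1
  have hA' : ∑ k ∈ Finset.range (B + 2), s k = A := by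
    have E1 := split4 hij hi1B hj1B s
    have E2 := split4 hij hi1B hj1B t
    have E0 : ∑ k ∈ Finset.range (B + 2) \ ({i, i + 1, j, j + 1} : Finset ℕ), s k =
        ∑ k ∈ Finset.range (B + 2) \ ({i, i + 1, j, j + 1} : Finset ℕ), t k :=
      Finset.sum_congr rfl hoff
    have hAt := sumA16 ht
    rw [E1, E0, hsi, hsi1, hsj, hsj1]
    rw [E2, hb, hc] at hAt
    omega
  have hB' : ∑ k ∈ Finset.range (B + 2), k * s k = B := by
    have E1 := split4 hij hi1B hj1B (fun k => k * s k)
    have E2 := split4 hij hi1B hj1B (fun k => k * t k)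
    have E0 : ∑ k ∈ Finset.range (B + 2) \ ({i, i + 1, j, j + 1} : Finset ℕ), k * s k =
        ∑ k ∈ Finset.range (B + 2) \ ({i, i + 1, j, j + 1} : Finset ℕ), k * t k :=
      Finset.sum_congr rfl (fun k hk => by rw [hoff k hk])
    have hBt := sumB16 ht
    rw [E1, E0, hsi, hsi1, hsj, hsj1]
    rw [E2, hb, hc] at hBt
    have key : i * (t i + 1) + ((i + 1) * b + (j * c + (j + 1) * (t (j + 1) + 1))) =
        i * t i + ((i + 1) * (b + 1) + (j * (c + 1) + (j + 1) * t (j + 1))) := by ring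
    omega
  refine ⟨s, mkGood16 hs0 hssub hA' hB', ?_, ?_⟩
  · unfold Pr16
    have E1 := prod4 hij hi1B hj1B (fun k => (s k).factorial)
    have E2 := prod4 hij hi1B hj1B (fun k => (t k).factorial)
    have E0 : ∏ k ∈ Finset.range (B + 2) \ ({i, i + 1, j, j + 1} : Finset ℕ),
        (s k).factorial =
        ∏ k ∈ Finset.range (B + 2) \ ({i, i + 1, j, j + 1} : Finset ℕ), (t k).factorial :=
      Finset.prod_congr rfl (fun k hk => by rw [hoff k hk])
    rw [E1, E2, E0, hsi, hsi1, hsj, hsj1, hb, hc]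
    exact Nat.mul_le_mul le_rfl (fact4 (by omega) (by omega))
  · unfold W16
    have E1 := split4 hij hi1B hj1B (fun k => k * k * s k)
    have E2 := split4 hij hi1B hj1B (fun k => k * k * t k)
    have E0 : ∑ k ∈ Finset.range (B + 2) \ ({i, i + 1, j, j + 1} : Finset ℕ), k * k * s k =
        ∑ k ∈ Finset.range (B + 2) \ ({i, i + 1, j, j + 1} : Finset ℕ), k * k * t k :=
      Finset.sum_congr rfl (fun k hk => by rw [hoff k hk])
    rw [E1, E0, hsi, hsi1, hsj, hsj1, E2, hb, hc]
    have key : i * i * t i + ((i + 1) * (i + 1) * (b + 1) + (j * j * (c + 1) +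
        (j + 1) * (j + 1) * t (j + 1))) <
        i * i * (t i + 1) + ((i + 1) * (i + 1) * b + (j * j * c +
        (j + 1) * (j + 1) * (t (j + 1) + 1))) := by nlinarith
    omega

private lemma move2 {A B : ℕ} {t : ℕ → ℕ} (ht : Good16 A B t) {i : ℕ} (hi : 1 ≤ i)
    (hv : t i < t (i + 1)) (h2 : 2 ≤ t (i + 1)) (h3 : t (i + 2) = 0) :
    ∃ s : ℕ → ℕ, Good16 A B s ∧ Pr16 B s ≤ Pr16 B t ∧ W16 B t < W16 B s := by
  obtain ⟨b, hb⟩ : ∃ b, t (i + 1) = b + 2 := ⟨t (i + 1) - 2, by omega⟩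
  set s : ℕ → ℕ := fun k => if k = i then t i + 1 else if k = i + 1 then b
    else if k = i + 2 then 1 else t k with hs
  have hiB : i + 1 ≤ B := supp16 ht (k := i + 1) (by omega)
  have hi2B : i + 2 < B + 2 := by omega
  have hsi : s i = t i + 1 := by simp [hs]
  have hsi1 : s (i + 1) = b := by
    have e1 : i + 1 ≠ i := by omega
    simp [hs, e1]
  have hsi2 : s (i + 2) = 1 := by
    have e1 : i + 2 ≠ i := by omega
    have e2 : i + 2 ≠ i + 1 := by omega
    simp [hs, e1, e2]
  have hoff : ∀ k ∈ Finset.range (B + 2) \ ({i, i + 1, i + 2} : Finset ℕ), s k = t k := by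
    intro k hk
    simp only [Finset.mem_sdiff, Finset.mem_insert, Finset.mem_singleton, not_or] at hk
    obtain ⟨-, h1', h2', h3'⟩ := hk
    simp only [hs, if_neg h1', if_neg h2', if_neg h3']
  have hoffall : ∀ k, k ≠ i → k ≠ i + 1 → k ≠ i + 2 → s k = t k := by
    intro k h1' h2' h3'
    simp only [hs, if_neg h1', if_neg h2', if_neg h3']
  have hssub : Function.support s ⊆ ↑(Finset.range (B + 2)) := by
    intro k hk
    simp only [Function.mem_support] at hk
    simp only [Finset.coe_range, Set.mem_Iio]
    rcases eq_or_ne k i with rfl | h1'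
    · omega
    rcases eq_or_ne k (i + 1) with rfl | h2'
    · omega
    rcases eq_or_ne k (i + 2) with rfl | h3'
    · omega
    · rw [hoffall k h1' h2' h3'] at hk
      have := supp16 ht hk
      omega
  have hs0 : s 0 = 0 := by
    rw [hoffall 0 (by omega) (by omega) (by omega)]
    exact ht.1
  have hA' : ∑ k ∈ Finset.range (B + 2), s k = A := by
    have E1 := split3 hi2B s
    have E2 := split3 hi2B t
    have E0 : ∑ k ∈ Finset.range (B + 2) \ ({i, i + 1, i + 2} : Finset ℕ), s k =
        ∑ k ∈ Finset.range (B + 2) \ ({i, i + 1, i + 2} : Finset ℕ), t k :=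
      Finset.sum_congr rfl hoff
    have hAt := sumA16 ht
    rw [E1, E0, hsi, hsi1, hsi2]
    rw [E2, hb, h3] at hAt
    omega
  have hB' : ∑ k ∈ Finset.range (B + 2), k * s k = B := by
    have E1 := split3 hi2B (fun k => k * s k)
    have E2 := split3 hi2B (fun k => k * t k)
    have E0 : ∑ k ∈ Finset.range (B + 2) \ ({i, i + 1, i + 2} : Finset ℕ), k * s k =
        ∑ k ∈ Finset.range (B + 2) \ ({i, i + 1, i + 2} : Finset ℕ), k * t k :=
      Finset.sum_congr rfl (fun k hk => by rw [hoff k hk])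
    have hBt := sumB16 ht
    rw [E1, E0, hsi, hsi1, hsi2]
    rw [E2, hb, h3] at hBt
    have key : i * (t i + 1) + ((i + 1) * b + (i + 2) * 1) =
        i * t i + ((i + 1) * (b + 2) + (i + 2) * 0) := by ring
    omega
  refine ⟨s, mkGood16 hs0 hssub hA' hB', ?_, ?_⟩
  · unfold Pr16
    have E1 := prod3 hi2B (fun k => (s k).factorial)
    have E2 := prod3 hi2B (fun k => (t k).factorial)
    have E0 : ∏ k ∈ Finset.range (B + 2) \ ({i, i + 1, i + 2} : Finset ℕ), (s k).factorial =
        ∏ k ∈ Finset.range (B + 2) \ ({i, i + 1, i + 2} : Finset ℕ), (t k).factorial :=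
      Finset.prod_congr rfl (fun k hk => by rw [hoff k hk])
    rw [E1, E2, E0, hsi, hsi1, hsi2, hb, h3]
    have : (1 : ℕ).factorial = 1 := rfl
    rw [this]
    have : (0 : ℕ).factorial = 1 := rfl
    rw [this]
    exact Nat.mul_le_mul le_rfl (fact3 (by omega))
  · unfold W16
    have E1 := split3 hi2B (fun k => k * k * s k)
    have E2 := split3 hi2B (fun k => k * k * t k)
    have E0 : ∑ k ∈ Finset.range (B + 2) \ ({i, i + 1, i + 2} : Finset ℕ), k * k * s k =
        ∑ k ∈ Finset.range (B + 2) \ ({i, i + 1, i + 2} : Finset ℕ), k * k * t k :=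
      Finset.sum_congr rfl (fun k hk => by rw [hoff k hk])
    rw [E1, E0, hsi, hsi1, hsi2, E2, hb, h3]
    have key : i * i * t i + ((i + 1) * (i + 1) * (b + 2) + (i + 2) * (i + 2) * 0) <
        i * i * (t i + 1) + ((i + 1) * (i + 1) * b + (i + 2) * (i + 2) * 1) := by nlinarith
    omega

/-- Among all finitely supported sequences `(t_i)_{i ≥ 1}` of natural numbers with
`∑ t_i = A` and `∑ i·t_i = B` (a nonempty collection), there is one minimizing
`∏ (t_i)!` such that `t_i ≥ t_{i+1}` for all but at most one index `i ≥ 1`, and at any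
exceptional index one has `t_i = 0`, `t_{i+1} = 1` and `t_{i+2} = 0`.
(Sequences are encoded as functions `ℕ → ℕ` vanishing at `0`.) -/
theorem statement16 (A B : ℕ)
    (hS : ∃ t : ℕ → ℕ, t 0 = 0 ∧ (Function.support t).Finite ∧
      (∑ᶠ i : ℕ, t i) = A ∧ (∑ᶠ i : ℕ, i * t i) = B) :
    ∃ t : ℕ → ℕ, t 0 = 0 ∧ (Function.support t).Finite ∧
      (∑ᶠ i : ℕ, t i) = A ∧ (∑ᶠ i : ℕ, i * t i) = B ∧
      (∀ s : ℕ → ℕ, s 0 = 0 → (Function.support s).Finite →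
        (∑ᶠ i : ℕ, s i) = A → (∑ᶠ i : ℕ, i * s i) = B →
        (∏ᶠ i : ℕ, (t i).factorial) ≤ ∏ᶠ i : ℕ, (s i).factorial) ∧
      (∀ i j : ℕ, 1 ≤ i → 1 ≤ j → t i < t (i + 1) → t j < t (j + 1) → i = j) ∧
      (∀ i : ℕ, 1 ≤ i → t i < t (i + 1) →
        t i = 0 ∧ t (i + 1) = 1 ∧ t (i + 2) = 0) := by
  obtain ⟨t0, ht0⟩ := hS
  have hg0 : Good16 A B t0 := ht0
  set P : Set ℕ := {p | ∃ u, Good16 A B u ∧ Pr16 B u = p} with hP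
  have hPne : P.Nonempty := ⟨_, t0, hg0, rfl⟩
  obtain ⟨t1, hg1, hp1⟩ := Nat.sInf_mem hPne
  have hmin : ∀ u, Good16 A B u → sInf P ≤ Pr16 B u := fun u hu => Nat.sInf_le ⟨u, hu, rfl⟩
  set Q : Set ℕ := {w | ∃ u, Good16 A B u ∧ Pr16 B u = sInf P ∧ W16 B u = w} with hQ
  have hQne : Q.Nonempty := ⟨_, t1, hg1, hp1, rfl⟩
  have hQbdd : BddAbove Q := by
    refine ⟨B * B, ?_⟩
    rintro w ⟨u, hu, -, rfl⟩
    unfold W16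
    calc ∑ k ∈ Finset.range (B + 2), k * k * u k
        ≤ ∑ k ∈ Finset.range (B + 2), B * (k * u k) := by
          apply Finset.sum_le_sum
          intro k hk
          by_cases h0 : u k = 0
          · simp [h0]
          · have hkB := supp16 hu h0
            calc k * k * u k = k * (k * u k) := by ring
              _ ≤ B * (k * u k) := Nat.mul_le_mul_right _ hkB
      _ = B * ∑ k ∈ Finset.range (B + 2), k * u k := (Finset.mul_sum _ _ _).symm
      _ = B * B := by rw [sumB16 hu]
  obtain ⟨t, htg, hPrt, hWt⟩ := Nat.sSup_mem hQne hQbdd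
  have hWmax : ∀ u, Good16 A B u → Pr16 B u = sInf P → W16 B u ≤ sSup Q :=
    fun u hu hp => le_csSup hQbdd ⟨u, hu, hp, rfl⟩
  have star : ∀ i, 1 ≤ i → t i < t (i + 1) →
      t i = 0 ∧ t (i + 1) = 1 ∧ (∀ k, i + 2 ≤ k → t k = 0) := by
    intro i hi hv
    have contra : ∀ s : ℕ → ℕ, Good16 A B s → Pr16 B s ≤ Pr16 B t → W16 B t < W16 B s →
        False := by
      intro s hsg hsp hsw
      have h1 : sInf P ≤ Pr16 B s := hmin s hsg
      have h2 : W16 B s ≤ sSup Q := hWmax s hsg (le_antisymm (hsp.trans_eq hPrt) h1)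
      omega
    have nodesc : ∀ j, i + 2 ≤ j → ¬ t (j + 1) < t j := by
      intro j hj hd
      obtain ⟨s, hsg, hsp, hsw⟩ := move1 htg hi hv hj hd
      exact contra s hsg hsp hsw
    have mono : ∀ j, i + 2 ≤ j → ∀ d, t j ≤ t (j + d) := by
      intro j hj d
      induction d with
      | zero => exact le_refl _
      | succ d ih =>
        have h1 := nodesc (j + d) (by omega)
        have h2 : j + (d + 1) = (j + d) + 1 := by omega
        rw [h2]
        omega
    have tail0 : ∀ k, i + 2 ≤ k → t k = 0 := by
      intro k hk
      have h1 : t k ≤ t (k + (B + 1)) := mono k hk (B + 1)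
      have h2 : t (k + (B + 1)) = 0 := by
        by_contra h
        have := supp16 htg h
        omega
      omega
    have h3 : t (i + 2) = 0 := tail0 _ le_rfl
    have hone : t (i + 1) = 1 := by
      by_contra hne
      have h2 : 2 ≤ t (i + 1) := by omega
      obtain ⟨s, hsg, hsp, hsw⟩ := move2 htg hi hv h2 h3
      exact contra s hsg hsp hsw
    exact ⟨by omega, hone, tail0⟩
  refine ⟨t, htg.1, htg.2.1, htg.2.2.1, htg.2.2.2, ?_, ?_, ?_⟩
  · intro s h0 hf hA hB
    have hgs : Good16 A B s := ⟨h0, hf, hA, hB⟩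
    rw [pr16 htg, pr16 hgs, hPrt]
    exact hmin s hgs
  · intro i j hi hj hvi hvj
    rcases lt_trichotomy i j with h | h | h
    · exfalso
      have := (star i hi hvi).2.2 (j + 1) (by omega)
      omega
    · exact h
    · exfalso
      have := (star j hj hvj).2.2 (i + 1) (by omega)
      omega
  · intro i hi hv
    obtain ⟨h0, h1, tl⟩ := star i hi hv
    exact ⟨h0, h1, tl (i + 2) le_rfl⟩
end

section
/- Let β′ and T be real numbers with 0 < β′ < T < 2β′, and for i ≥ 1 set t_i = ((T−β′)²/(2β′−T)) · ((2β′−T)/β′)^i. Then ∑_{i≥1} t_i = T − β′ and ∑_{i≥1} i·t_i = β′, and for every sequence (s_i)_{i≥1} of nonnegative real numbers with ∑_{i≥1} s_i = T − β′ and ∑_{i≥1} i·s_i = β′ one has ∑_{i≥1} s_i·ln(s_i) ≥ ∑_{i≥1} t_i·ln(t_i) = (T−β′)·ln((T−β′)²/(2β′−T)) + β′·ln((2β′−T)/β′). In other words, the geometric sequence (t_i) is the global minimizer of the entropy-type functional ∑ s_i ln s_i under the two linear constraints. -/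
lemma gibbs_pointwise (x y : ℝ) (hx : 0 ≤ x) (hy : 0 < y) :
    x * Real.log y + x - y ≤ x * Real.log x := by
  rcases eq_or_lt_of_le hx with h | h
  · simp [← h]; linarith
  · have h1 : Real.log (y / x) ≤ y / x - 1 :=
      Real.log_le_sub_one_of_pos (div_pos hy h)
    rw [Real.log_div (ne_of_gt hy) (ne_of_gt h)] at h1
    have h2 : x * (Real.log y - Real.log x) ≤ x * (y / x - 1) :=
      mul_le_mul_of_nonneg_left h1 h.le
    have h3 : x * (y / x) = y := by field_simp
    rw [mul_sub, mul_sub, h3, mul_one] at h2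
    linarith

lemma xlogx_le (x M : ℝ) (hx : 0 ≤ x) (hxM : x ≤ M) :
    x * Real.log x ≤ x * Real.log M := by
  rcases eq_or_lt_of_le hx with h | h
  · simp [← h]
  · exact mul_le_mul_of_nonneg_left (Real.log_le_log h hxM) hx

/-- Let `0 < β′ < T < 2β′` and `t_i = ((T−β′)²/(2β′−T))·((2β′−T)/β′)^i` for `i ≥ 1`. Then
`∑_{i≥1} t_i = T − β′`, `∑_{i≥1} i·t_i = β′`,
`∑_{i≥1} t_i·ln t_i = (T−β′)·ln((T−β′)²/(2β′−T)) + β′·ln((2β′−T)/β′)`, and for every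
sequence `(s_i)_{i≥1}` of nonnegative reals with `∑ s_i = T − β′` and `∑ i·s_i = β′` one has
`∑ s_i·ln s_i ≥ ∑ t_i·ln t_i`; i.e. the geometric sequence is the global minimizer of the
entropy functional under the two linear constraints. (Sums over `i ≥ 1` are written as
`tsum`s over `ℕ` of the shifted sequences; the convention `0·ln 0 = 0` holds since
`Real.log 0 = 0`.) -/
theorem statement17 (β' T : ℝ) (h0 : 0 < β') (h1 : β' < T) (h2 : T < 2 * β')
    (t : ℕ → ℝ)
    (ht : ∀ i : ℕ, t i = ((T - β') ^ 2 / (2 * β' - T)) * ((2 * β' - T) / β') ^ i) :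
    (∑' i : ℕ, t (i + 1)) = T - β' ∧
    (∑' i : ℕ, ((i : ℝ) + 1) * t (i + 1)) = β' ∧
    (∑' i : ℕ, t (i + 1) * Real.log (t (i + 1))) =
      (T - β') * Real.log ((T - β') ^ 2 / (2 * β' - T)) +
        β' * Real.log ((2 * β' - T) / β') ∧
    ∀ s : ℕ → ℝ, (∀ i : ℕ, 1 ≤ i → 0 ≤ s i) →
      Summable (fun i : ℕ => ((i : ℝ) + 1) * s (i + 1)) →
      (∑' i : ℕ, s (i + 1)) = T - β' →
      (∑' i : ℕ, ((i : ℝ) + 1) * s (i + 1)) = β' →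
      (∑' i : ℕ, t (i + 1) * Real.log (t (i + 1))) ≤
        ∑' i : ℕ, s (i + 1) * Real.log (s (i + 1)) := by
  set u : ℝ := T - β' with hu_def
  set v : ℝ := 2 * β' - T with hv_def
  have hu : 0 < u := by simp [hu_def]; linarith
  have hv : 0 < v := by simp [hv_def]; linarith
  set r : ℝ := v / β' with hr_def
  set a : ℝ := u ^ 2 / v with ha_def
  have hr0 : 0 < r := div_pos hv h0
  have hr1 : r < 1 := by rw [hr_def, div_lt_one h0]; linarith
  have ha : 0 < a := div_pos (pow_pos hu 2) hv
  have h1r : 1 - r = u / β' := by field_simp [hr_def]; rw [hr_def, sub_mul, one_mul, div_mul_cancel₀ _ h0.ne', hv_def, hu_def]; ring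
  have htp : ∀ i : ℕ, 0 < t i := fun i => by
    rw [ht i]; exact mul_pos ha (pow_pos hr0 i)
  -- summability of geometric series
  have hsg : Summable fun n : ℕ => r ^ n := summable_geometric_of_lt_one hr0.le hr1
  have hsn : Summable fun n : ℕ => (n : ℝ) * r ^ n := by
    have := (hasSum_coe_mul_geometric_of_norm_lt_one (𝕜 := ℝ)
      (r := r) (by rw [Real.norm_eq_abs, abs_of_pos hr0]; exact hr1)).summable
    exact this
  have hst : Summable fun i : ℕ => t (i + 1) := by
    have : (fun i : ℕ => t (i + 1)) = fun i : ℕ => (a * r) * r ^ i := by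
      funext i; rw [ht (i + 1)]; ring
    rw [this]; exact hsg.mul_left _
  have hsnt : Summable fun i : ℕ => ((i : ℝ) + 1) * t (i + 1) := by
    have : (fun i : ℕ => ((i : ℝ) + 1) * t (i + 1)) =
        fun i : ℕ => (a * r) * ((i : ℝ) * r ^ i) + (a * r) * r ^ i := by
      funext i; rw [ht (i + 1)]; ring
    rw [this]; exact (hsn.mul_left _).add (hsg.mul_left _)
  -- first sum
  have S1 : (∑' i : ℕ, t (i + 1)) = u := by
    have e : (fun i : ℕ => t (i + 1)) = fun i : ℕ => (a * r) * r ^ i := by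
      funext i; rw [ht (i + 1)]; ring
    rw [e, tsum_mul_left, tsum_geometric_of_lt_one hr0.le hr1, h1r]
    rw [ha_def, hr_def]
    field_simp
  -- second sum
  have S2 : (∑' i : ℕ, ((i : ℝ) + 1) * t (i + 1)) = β' := by
    have e : (fun i : ℕ => ((i : ℝ) + 1) * t (i + 1)) =
        fun i : ℕ => (a * r) * ((i : ℝ) * r ^ i) + (a * r) * r ^ i := by
      funext i; rw [ht (i + 1)]; ring
    rw [e, Summable.tsum_add (hsn.mul_left _) (hsg.mul_left _), tsum_mul_left, tsum_mul_left,
      tsum_geometric_of_lt_one hr0.le hr1,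
      tsum_coe_mul_geometric_of_norm_lt_one
        (by rw [Real.norm_eq_abs, abs_of_pos hr0]; exact hr1), h1r]
    rw [ha_def, hr_def]
    field_simp
    ring
  have hlog : ∀ i : ℕ, Real.log (t (i + 1)) =
      Real.log a + ((i : ℝ) + 1) * Real.log r := by
    intro i
    rw [ht (i + 1), Real.log_mul (ne_of_gt ha) (ne_of_gt (pow_pos hr0 _)),
      Real.log_pow]
    push_cast
    ring
  -- third sum
  have S3 : (∑' i : ℕ, t (i + 1) * Real.log (t (i + 1))) =
      u * Real.log a + β' * Real.log r := by
    have e : (fun i : ℕ => t (i + 1) * Real.log (t (i + 1))) =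
        fun i : ℕ => t (i + 1) * Real.log a +
          (((i : ℝ) + 1) * t (i + 1)) * Real.log r := by
      funext i; rw [hlog i]; ring
    rw [e, Summable.tsum_add (hst.mul_right _) (hsnt.mul_right _), tsum_mul_right,
      tsum_mul_right, S1, S2]
  refine ⟨S1, S2, S3, ?_⟩
  intro s hs hsum hS1 hS2
  have hs' : ∀ i : ℕ, 0 ≤ s (i + 1) := fun i => hs (i + 1) (Nat.le_add_left 1 i)
  have hss : Summable fun i : ℕ => s (i + 1) := by
    refine Summable.of_nonneg_of_le hs' (fun i => ?_) hsum
    nlinarith [hs' i, Nat.cast_nonneg (α := ℝ) i]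
  -- g i = s(i+1) log t(i+1) + s(i+1) - t(i+1)
  set g : ℕ → ℝ := fun i =>
    s (i + 1) * Real.log (t (i + 1)) + s (i + 1) - t (i + 1) with hg_def
  have hsg2 : Summable g := by
    have e : g = fun i => (s (i + 1) * Real.log a +
        (((i : ℝ) + 1) * s (i + 1)) * Real.log r) + s (i + 1) - t (i + 1) := by
      funext i; rw [hg_def]; simp only; rw [hlog i]; ring
    rw [e]
    exact (((hss.mul_right _).add (hsum.mul_right _)).add hss).sub hst
  have htsum_g : (∑' i : ℕ, g i) = u * Real.log a + β' * Real.log r := by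
    have e : g = fun i => ((s (i + 1) * Real.log a +
        (((i : ℝ) + 1) * s (i + 1)) * Real.log r) + s (i + 1)) - t (i + 1) := by
      funext i; rw [hg_def]; simp only; rw [hlog i]; ring
    rw [e, Summable.tsum_sub (((hss.mul_right _).add (hsum.mul_right _)).add hss) hst,
      Summable.tsum_add ((hss.mul_right _).add (hsum.mul_right _)) hss,
      Summable.tsum_add (hss.mul_right _) (hsum.mul_right _), tsum_mul_right, tsum_mul_right,
      hS1, hS2, S1]
    ring
  -- f i = s log s - g i ≥ 0
  set f : ℕ → ℝ := fun i => s (i + 1) * Real.log (s (i + 1)) - g i with hf_def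
  have hf0 : ∀ i, 0 ≤ f i := by
    intro i
    have := gibbs_pointwise (s (i + 1)) (t (i + 1)) (hs' i) (htp (i + 1))
    rw [hf_def]; simp only [hg_def]; linarith
  have hsleu : ∀ i, s (i + 1) ≤ u := by
    intro i
    rw [← hS1]
    exact Summable.le_tsum hss i (fun j _ => hs' j)
  have hfsum : Summable f := by
    refine Summable.of_nonneg_of_le hf0 (fun i => ?_)
      (((hss.mul_right (Real.log u)).sub hsg2))
    have := xlogx_le (s (i + 1)) u (hs' i) (hsleu i)
    rw [hf_def]; simp only; linarith
  have key : (fun i : ℕ => s (i + 1) * Real.log (s (i + 1))) = fun i => g i + f i := by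
    funext i; rw [hf_def]; ring
  rw [key, Summable.tsum_add hsg2 hfsum, htsum_g, S3]
  have : 0 ≤ ∑' i, f i := tsum_nonneg hf0
  linarith
end
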